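/- If S ⊆ ℝⁿ is a finite union of standard tentacles, then the graded algebra B(S) = ⊕_{d≥0} B_d(S), viewed as the subalgebra of ℝ[x₁,…,xₙ,t] spanned by the monomials x^α t^d with p = x^α ∈ B_d(S), is a finitely generated ℝ-algebra. -/

import Mathlib

open MvPolynomial

def Bset (n d : ℕ) (S : Set (Fin n → ℝ)) : Set (MvPolynomial (Fin n) ℝ) :=
  {p | ∃ q : MvPolynomial (Fin n) ℝ, q.totalDegree ≤ 2 * d ∧ ∀ a ∈ S, (eval a p) ^ 2 ≤ eval a q}

inductive IsSemialgebraic {n : ℕ} : Set (Fin n → ℝ) → Prop where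
  | lt (p : MvPolynomial (Fin n) ℝ) : IsSemialgebraic {a | 0 < eval a p}
  | compl {s : Set (Fin n → ℝ)} : IsSemialgebraic s → IsSemialgebraic sᶜ
  | union {s t : Set (Fin n → ℝ)} :
      IsSemialgebraic s → IsSemialgebraic t → IsSemialgebraic (s ∪ t)

/-- The monomials `x^α t^d` in `ℝ[x₁,…,xₙ,t]` with `x^α ∈ B_d(S)`; their span is `B(S)`. -/
noncomputable def BMonomials (n : ℕ) (S : Set (Fin n → ℝ)) :
    Set (MvPolynomial (Fin (n + 1)) ℝ) :=
  {f | ∃ (d : ℕ) (α : Fin n →₀ ℕ), (monomial α (1 : ℝ)) ∈ Bset n d S ∧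
    f = monomial (Finsupp.equivFunOnFinite.symm (Fin.snoc (fun j => α j) d)) (1 : ℝ)}

lemma subtraction_monoid_fg {σ : Type*} [Fintype σ] (M : AddSubmonoid (σ →₀ ℕ))
    (hsub : ∀ x ∈ M, ∀ y ∈ M, y ≤ x → x - y ∈ M) :
    ∃ G : Finset (σ →₀ ℕ), AddSubmonoid.closure (↑G : Set (σ →₀ ℕ)) = M := by
  classical
  set Gs : Set (σ →₀ ℕ) := {g | g ∈ M ∧ g ≠ 0 ∧ ∀ y ∈ M, y ≤ g → y = 0 ∨ y = g} with hGs
  have hGanti : IsAntichain (· ≤ ·) Gs := by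
    intro a ha b hb hne hle
    rcases hb.2.2 a ha.1 hle with h | h
    · exact ha.2.1 h
    · exact hne h
  have hGfin : Gs.Finite := hGanti.finite_of_partiallyWellOrderedOn (Set.isPWO_of_wellQuasiOrderedLE Gs)
  refine ⟨hGfin.toFinset, le_antisymm ?_ ?_⟩
  · rw [AddSubmonoid.closure_le]
    intro g hg
    rw [Set.Finite.coe_toFinset] at hg
    exact hg.1
  · intro x hx
    have key : ∀ N : ℕ, ∀ x ∈ M, (∑ a, x a) ≤ N →
        x ∈ AddSubmonoid.closure (↑hGfin.toFinset : Set (σ →₀ ℕ)) := by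
      intro N
      induction N with
      | zero =>
        intro x hx hdeg
        have : x = 0 := by
          ext a
          have := Finset.sum_eq_zero_iff.mp (Nat.le_zero.mp hdeg) a (Finset.mem_univ a)
          simpa using this
        rw [this]; exact zero_mem _
      | succ N ih =>
        intro x hx hdeg
        by_cases hx0 : x = 0
        · rw [hx0]; exact zero_mem _
        have hWF : Set.IsWF {y | y ∈ M ∧ y ≠ 0 ∧ y ≤ x} := (Set.isPWO_of_wellQuasiOrderedLE _).isWF
        have hne : {y | y ∈ M ∧ y ≠ 0 ∧ y ≤ x}.Nonempty := ⟨x, hx, hx0, le_refl x⟩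
        set g := hWF.min hne with hgdef
        have hg : g ∈ M ∧ g ≠ 0 ∧ g ≤ x := hWF.min_mem hne
        have hgG : g ∈ Gs := by
          refine ⟨hg.1, hg.2.1, fun y hy hyle => ?_⟩
          by_contra hcon
          push_neg at hcon
          have hylt : y < g := lt_of_le_of_ne hyle hcon.2
          exact hWF.not_lt_min hne ⟨hy, hcon.1, hyle.trans hg.2.2⟩ hylt
        have hxg : x - g ∈ M := hsub x hx g hg.1 hg.2.2
        have hdeg' : (∑ a, (x - g) a) ≤ N := by
          have hsum : (∑ a, (x - g) a) + (∑ a, g a) = ∑ a, x a := by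
            rw [← Finset.sum_add_distrib]
            refine Finset.sum_congr rfl fun a _ => ?_
            rw [Finsupp.tsub_apply]
            exact Nat.sub_add_cancel (hg.2.2 a)
          have hgpos : 1 ≤ ∑ a, g a := by
            by_contra hcon
            push_neg at hcon
            have : ∀ a, g a = 0 := by
              intro a
              have := Finset.sum_eq_zero_iff.mp (Nat.lt_one_iff.mp hcon) a (Finset.mem_univ a)
              simpa using this
            exact hg.2.1 (Finsupp.ext this)
          omega
        have h1 : x - g ∈ AddSubmonoid.closure (↑hGfin.toFinset : Set (σ →₀ ℕ)) :=
          ih (x - g) hxg hdeg'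
        have h2 : g ∈ AddSubmonoid.closure (↑hGfin.toFinset : Set (σ →₀ ℕ)) := by
          apply AddSubmonoid.subset_closure
          rw [Set.Finite.coe_toFinset]
          exact hgG
        have hx' : x = (x - g) + g := (tsub_add_cancel_of_le hg.2.2).symm
        rw [hx']
        exact add_mem h1 h2
    exact key (∑ a, x a) x hx le_rfl

lemma ineq_monoid_fg (k m : ℕ) (L : Fin m → Fin k → ℤ) :
    ∃ G : Finset (Fin k →₀ ℕ),
      ∀ x : Fin k →₀ ℕ, x ∈ AddSubmonoid.closure (↑G : Set (Fin k →₀ ℕ)) ↔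
        ∀ i, (∑ j, L i j * (x j : ℤ)) ≤ 0 := by
  classical
  -- the monoid with slack variables, cut out by equations
  set E : AddSubmonoid ((Fin k ⊕ Fin m) →₀ ℕ) :=
  { carrier := {y | ∀ i, (∑ j, (L i j).toNat * y (Sum.inl j)) + y (Sum.inr i)
      = ∑ j, (-(L i j)).toNat * y (Sum.inl j)}
    add_mem' := by
      intro y z hy hz i
      have h1 := hy i
      have h2 := hz i
      simp only [Finsupp.add_apply, mul_add, Finset.sum_add_distrib]
      omega
    zero_mem' := by simp } with hE
  have hsub : ∀ x ∈ E, ∀ y ∈ E, y ≤ x → x - y ∈ E := by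
    intro x hx y hy hle i
    have h1 := hx i
    have h2 := hy i
    have hco : ∀ a, y a ≤ x a := fun a => Finsupp.le_def.mp hle a
    simp only [Finsupp.tsub_apply]
    have e1 : ∀ (c : Fin k → ℕ), (∑ j, c j * (x (Sum.inl j) - y (Sum.inl j)))
        = (∑ j, c j * x (Sum.inl j)) - (∑ j, c j * y (Sum.inl j)) ∧
        (∑ j, c j * y (Sum.inl j)) ≤ (∑ j, c j * x (Sum.inl j)) := by
      intro c
      constructor
      · rw [eq_tsub_iff_add_eq_of_le, ← Finset.sum_add_distrib]
        · refine Finset.sum_congr rfl fun j _ => ?_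
          rw [← mul_add]
          congr 1
          have := hco (Sum.inl j)
          omega
        · exact Finset.sum_le_sum fun j _ => Nat.mul_le_mul_left _ (hco _)
      · exact Finset.sum_le_sum fun j _ => Nat.mul_le_mul_left _ (hco _)
    obtain ⟨e1p, e1ple⟩ := e1 (fun j => (L i j).toNat)
    obtain ⟨e1n, e1nle⟩ := e1 (fun j => (-(L i j)).toNat)
    rw [e1p, e1n]
    have := hco (Sum.inr i)
    omega
  obtain ⟨GE, hGE⟩ := subtraction_monoid_fg E hsub
  set π : ((Fin k ⊕ Fin m) →₀ ℕ) →+ (Fin k →₀ ℕ) :=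
    Finsupp.comapDomain.addMonoidHom Sum.inl_injective with hπ
  have hπapp : ∀ (y : (Fin k ⊕ Fin m) →₀ ℕ) (j : Fin k), (π y) j = y (Sum.inl j) := by
    intro y j
    simp [hπ, Finsupp.comapDomain.addMonoidHom, Finsupp.comapDomain]
  refine ⟨GE.image π, fun x => ?_⟩
  have himg : AddSubmonoid.closure (↑(GE.image π) : Set (Fin k →₀ ℕ)) = E.map π := by
    rw [Finset.coe_image, ← AddMonoidHom.map_mclosure, hGE]
  rw [himg]
  constructor
  · rintro ⟨y, hy, rfl⟩
    intro i
    have h1 := hy i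
    have hcast : ((∑ j, (L i j).toNat * y (Sum.inl j)) + y (Sum.inr i) : ℤ)
        = ∑ j, ((-(L i j)).toNat : ℤ) * y (Sum.inl j) := by
      exact_mod_cast congrArg (Nat.cast : ℕ → ℤ) h1
    push_cast at hcast
    have hrw : (∑ j, L i j * ((π y) j : ℤ))
        = (∑ j, ((L i j).toNat : ℤ) * y (Sum.inl j)) - ∑ j, ((-(L i j)).toNat : ℤ) * y (Sum.inl j) := by
      rw [← Finset.sum_sub_distrib]
      refine Finset.sum_congr rfl fun j _ => ?_
      rw [hπapp, ← sub_mul]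
      congr 1
      omega
    rw [hrw]
    linarith
  · intro hineq
    refine ⟨Finsupp.equivFunOnFinite.symm (Sum.elim (fun j => x j)
      (fun i => (-(∑ j, L i j * (x j : ℤ))).toNat)), ?_, ?_⟩
    · intro i
      simp only [Finsupp.coe_equivFunOnFinite_symm, Sum.elim_inl, Sum.elim_inr]
      have h0 := hineq i
      have : ((∑ j, (L i j).toNat * x j : ℕ) : ℤ) + (((-(∑ j, L i j * (x j : ℤ))).toNat : ℤ))
          = ((∑ j, (-(L i j)).toNat * x j : ℕ) : ℤ) := by
        rw [Int.toNat_of_nonneg (by linarith)]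
        push_cast
        have key : (∑ j, ((L i j).toNat : ℤ) * x j) - (∑ j, ((-(L i j)).toNat : ℤ) * x j)
            = ∑ j, L i j * (x j : ℤ) := by
          rw [← Finset.sum_sub_distrib]
          refine Finset.sum_congr rfl fun j _ => ?_
          rw [← sub_mul]
          congr 1
          omega
        linarith [key]
      exact_mod_cast this
    · apply Finsupp.ext
      intro j
      rw [hπapp]
      simp

lemma adjoin_monomials {σ : Type*} [Fintype σ] [DecidableEq σ] (G : Finset (σ →₀ ℕ)) :
    (Algebra.adjoin ℝ ((G.image fun μ => monomial μ (1 : ℝ)) : Set (MvPolynomial σ ℝ)) :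
        Set (MvPolynomial σ ℝ)) =
      ↑(Submodule.span ℝ ((fun μ => monomial μ (1 : ℝ)) ''
        (AddSubmonoid.closure (↑G : Set (σ →₀ ℕ)) : Set (σ →₀ ℕ)))) := by
  classical
  set s : Set (MvPolynomial σ ℝ) := (fun μ => monomial μ (1 : ℝ)) ''
    (AddSubmonoid.closure (↑G : Set (σ →₀ ℕ)) : Set (σ →₀ ℕ)) with hs
  set T : Submodule ℝ (MvPolynomial σ ℝ) := Submodule.span ℝ s with hT
  have hmulmem : ∀ x ∈ T, ∀ y ∈ T, x * y ∈ T := by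
    intro x hx y hy
    have h1 : x * y ∈ T * T := Submodule.mul_mem_mul hx hy
    have h2 : T * T ≤ T := by
      rw [hT, Submodule.span_mul_span]
      apply Submodule.span_le.mpr
      intro p hp
      rw [Set.mem_mul] at hp
      obtain ⟨u, hu, v, hv, rfl⟩ := hp
      obtain ⟨μ, hμ, rfl⟩ := hu
      obtain ⟨ν, hν, rfl⟩ := hv
      apply Submodule.subset_span
      refine ⟨μ + ν, add_mem hμ hν, ?_⟩
      rw [monomial_mul, one_mul]
    exact h2 h1
  have honemem : (1 : MvPolynomial σ ℝ) ∈ T := by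
    apply Submodule.subset_span
    exact ⟨0, zero_mem _, by simp⟩
  set A : Subalgebra ℝ (MvPolynomial σ ℝ) :=
  { carrier := T
    mul_mem' := fun hx hy => hmulmem _ hx _ hy
    one_mem' := honemem
    add_mem' := fun hx hy => T.add_mem hx hy
    zero_mem' := T.zero_mem
    algebraMap_mem' := by
      intro r
      have : (algebraMap ℝ (MvPolynomial σ ℝ)) r = r • (1 : MvPolynomial σ ℝ) := by
        rw [Algebra.algebraMap_eq_smul_one]
      rw [this]
      exact T.smul_mem r honemem } with hA
  apply le_antisymm
  · have : Algebra.adjoin ℝ ((G.image fun μ => monomial μ (1 : ℝ)) : Set (MvPolynomial σ ℝ)) ≤ A := by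
      apply Algebra.adjoin_le
      intro p hp
      rw [Finset.coe_image] at hp
      obtain ⟨μ, hμ, rfl⟩ := hp
      exact Submodule.subset_span ⟨μ, AddSubmonoid.subset_closure hμ, rfl⟩
    exact this
  · show (T : Set (MvPolynomial σ ℝ)) ⊆ _
    have hsub : s ⊆ (Algebra.adjoin ℝ ((G.image fun μ => monomial μ (1 : ℝ)) : Set (MvPolynomial σ ℝ)) :
        Set (MvPolynomial σ ℝ)) := by
      rintro p ⟨μ, hμ, rfl⟩
      rw [SetLike.mem_coe]
      induction hμ using AddSubmonoid.closure_induction with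
      | mem g hg =>
        apply Algebra.subset_adjoin
        rw [Finset.coe_image]
        exact ⟨g, hg, rfl⟩
      | zero =>
        have : ((monomial (0 : σ →₀ ℕ)) (1 : ℝ)) = 1 := by simp
        show ((monomial (0 : σ →₀ ℕ)) (1 : ℝ)) ∈ _
        rw [this]
        exact (Algebra.adjoin ℝ _).one_mem
      | add a b ha hb iha ihb =>
        show ((monomial (a + b)) (1 : ℝ)) ∈ _
        have h2 := mul_mem iha ihb
        simp only [monomial_mul, one_mul] at h2
        exact h2
    have hle : Submodule.span ℝ s ≤
        Subalgebra.toSubmodule (Algebra.adjoin ℝ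
          ((G.image fun μ => monomial μ (1 : ℝ)) : Set (MvPolynomial σ ℝ))) :=
      Submodule.span_le.mpr hsub
    exact fun p hp => hle hp

lemma rpow_sum {l : ℝ} (hl : 0 < l) {ι : Type*} (s : Finset ι) (f : ι → ℝ) :
    l ^ (∑ j ∈ s, f j) = ∏ j ∈ s, l ^ (f j) := by
  classical
  induction s using Finset.cons_induction with
  | empty => simp [Real.rpow_zero]
  | cons a s ha ih =>
    rw [Finset.sum_cons, Finset.prod_cons, Real.rpow_add hl, ih]

lemma rpow_pow {l : ℝ} (hl : 0 < l) (x : ℝ) (e : ℕ) :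
    (l ^ x) ^ e = l ^ (x * e) := by
  rw [← Real.rpow_natCast (l ^ x) e, ← Real.rpow_mul hl.le]

lemma tent_eval {n : ℕ} {l : ℝ} (hl : 0 < l) (c : Fin n → ℤ) (e : Fin n → ℕ) (b : Fin n → ℝ) :
    (∏ j, (l ^ (c j) * b j) ^ (e j)) =
      l ^ (((∑ j, c j * (e j : ℤ)) : ℤ) : ℝ) * ∏ j, b j ^ (e j) := by
  have h1 : ∀ j : Fin n, (l ^ (c j) * b j) ^ (e j)
      = l ^ ((c j : ℝ) * (e j : ℕ)) * b j ^ (e j) := by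
    intro j
    rw [mul_pow, ← Real.rpow_intCast l (c j), rpow_pow hl]
  rw [Finset.prod_congr rfl fun j _ => h1 j, Finset.prod_mul_distrib, ← rpow_sum hl]
  congr 1
  push_cast
  ring

def phi {n m : ℕ} (z : Fin m → Fin n → ℤ) (i : Fin m) : ℕ :=
  Finset.univ.sup fun j => (z i j).toNat

lemma eval_monomial_prod {n : ℕ} (α : Fin n →₀ ℕ) (a : Fin n → ℝ) :
    eval a (monomial α (1 : ℝ)) = ∏ j, a j ^ α j := by
  rw [eval_monomial, one_mul]
  exact Finsupp.prod_fintype _ _ fun j => pow_zero _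

lemma tentacle_q {n m : ℕ} (z : Fin m → Fin n → ℤ) (B : Fin m → Set (Fin n → ℝ))
    (d : ℕ) (α : Fin n →₀ ℕ) (i : Fin m)
    (hBcpt : IsCompact (B i)) (hBne : ∀ b ∈ B i, ∀ j, b j ≠ 0)
    (hi : (∑ j, z i j * (α j : ℤ)) ≤ (d : ℤ) * (phi z i : ℤ)) :
    ∃ q : MvPolynomial (Fin n) ℝ, q.totalDegree ≤ 2 * d ∧ (∀ a, 0 ≤ eval a q) ∧
      ∀ l : ℝ, 1 ≤ l → ∀ b ∈ B i,
        (eval (fun j => l ^ (z i j) * b j) (monomial α (1 : ℝ))) ^ 2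
          ≤ eval (fun j => l ^ (z i j) * b j) q := by
  classical
  obtain ⟨D0, hD0⟩ : ∃ D0, ∀ b ∈ B i, (∏ j, b j ^ (α j)) ^ 2 ≤ D0 := by
    have hcont : Continuous fun b : Fin n → ℝ => (∏ j, b j ^ (α j)) ^ 2 := by continuity
    obtain ⟨D0, hD0⟩ := hBcpt.bddAbove_image hcont.continuousOn
    exact ⟨D0, fun b hb => hD0 (Set.mem_image_of_mem _ hb)⟩
  set D := max D0 0 with hDdef
  have hD : 0 ≤ D := le_max_right _ _
  have hDb : ∀ b ∈ B i, (∏ j, b j ^ (α j)) ^ 2 ≤ D := fun b hb => (hD0 b hb).trans (le_max_left _ _)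
  -- the key square computation
  have hsq : ∀ l : ℝ, 0 < l → ∀ b : Fin n → ℝ,
      (eval (fun j => l ^ (z i j) * b j) (monomial α (1 : ℝ))) ^ 2
        = l ^ ((((∑ j, z i j * (α j : ℤ)) : ℤ) : ℝ) * 2) * (∏ j, b j ^ (α j)) ^ 2 := by
    intro l hl0 b
    rw [eval_monomial_prod, tent_eval hl0, mul_pow, rpow_pow hl0]
    norm_num
  by_cases hφ : phi z i = 0
  · refine ⟨C D, by simp, by intro a; simp [hD], ?_⟩
    intro l hl1 b hb
    have hl0 : (0 : ℝ) < l := lt_of_lt_of_le one_pos hl1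
    rw [hsq l hl0 b, eval_C]
    have hexp : (((∑ j, z i j * (α j : ℤ)) : ℤ) : ℝ) * 2 ≤ 0 := by
      have : (∑ j, z i j * (α j : ℤ)) ≤ 0 := by rw [hφ] at hi; simpa using hi
      have h2 : (((∑ j, z i j * (α j : ℤ)) : ℤ) : ℝ) ≤ 0 := by exact_mod_cast this
      linarith
    have h1 : l ^ ((((∑ j, z i j * (α j : ℤ)) : ℤ) : ℝ) * 2) ≤ 1 :=
      Real.rpow_le_one_of_one_le_of_nonpos hl1 hexp
    nlinarith [hDb b hb, sq_nonneg (∏ j, b j ^ (α j)),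
      Real.rpow_nonneg hl0.le ((((∑ j, z i j * (α j : ℤ)) : ℤ) : ℝ) * 2)]
  · -- pick a coordinate achieving the sup
    have hne' : (Finset.univ : Finset (Fin n)).Nonempty := by
      rcases Finset.eq_empty_or_nonempty (Finset.univ : Finset (Fin n)) with h | h
      · exact absurd (by simp [phi, h]) hφ
      · exact h
    obtain ⟨k, _, hksup⟩ := Finset.exists_mem_eq_sup Finset.univ hne' (fun j => (z i j).toNat)
    have hksup' : phi z i = (z i k).toNat := hksup
    have hzk : z i k = (phi z i : ℤ) := by omega
    by_cases hBempty : (B i).Nonempty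
    swap
    · refine ⟨0, ?_, ?_, fun l _ b hb => absurd ⟨b, hb⟩ hBempty⟩
      · rw [totalDegree_zero]; exact Nat.zero_le _
      · intro a; rw [map_zero]
    have hcont2 : Continuous fun b : Fin n → ℝ => b k ^ (2 * d) := (continuous_apply k).pow _
    obtain ⟨b0, hb0, hmin'⟩ := hBcpt.exists_isMinOn hBempty hcont2.continuousOn
    have hmin : ∀ b ∈ B i, b0 k ^ (2 * d) ≤ b k ^ (2 * d) := fun b hb => hmin' hb
    set ε := b0 k ^ (2 * d) with hεdef
    have hεpos : 0 < ε := by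
      have hb0k : b0 k ≠ 0 := hBne b0 hb0 k
      rw [hεdef, pow_mul]
      exact pow_pos (by positivity) d
    refine ⟨C (D / ε) * (X k) ^ (2 * d), ?_, ?_, ?_⟩
    · refine le_trans (totalDegree_mul _ _) ?_
      simp [totalDegree_X_pow]
    · intro a
      have : eval a (C (D / ε) * (X k) ^ (2 * d)) = (D / ε) * a k ^ (2 * d) := by simp
      rw [this, pow_mul]
      have := pow_nonneg (sq_nonneg (a k)) d
      positivity
    · intro l hl1 b hb
      have hl0 : (0 : ℝ) < l := lt_of_lt_of_le one_pos hl1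
      rw [hsq l hl0 b]
      have hevq : eval (fun j => l ^ (z i j) * b j) (C (D / ε) * (X k) ^ (2 * d))
          = (D / ε) * (l ^ ((z i k : ℝ) * ((2 * d : ℕ) : ℝ)) * b k ^ (2 * d)) := by
        simp only [eval_mul, eval_C, eval_pow, eval_X]
        rw [mul_pow, ← Real.rpow_intCast l (z i k), rpow_pow hl0]
      rw [hevq]
      set s : ℝ := (((∑ j, z i j * (α j : ℤ)) : ℤ) : ℝ) * 2 with hsdef
      set t : ℝ := (z i k : ℝ) * ((2 * d : ℕ) : ℝ) with htdef
      have hstZ : (∑ j, z i j * (α j : ℤ)) * 2 ≤ z i k * ((2 * d : ℕ) : ℤ) := by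
        rw [hzk]; push_cast; linarith
      have hst : s ≤ t := by
        rw [hsdef, htdef]; exact_mod_cast hstZ
      have hA : l ^ s ≤ l ^ t := Real.rpow_le_rpow_of_exponent_le hl1 hst
      have hA0 : (0:ℝ) ≤ l ^ s := Real.rpow_nonneg hl0.le s
      have hAt0 : (0:ℝ) ≤ l ^ t := Real.rpow_nonneg hl0.le t
      have hP2D : (∏ j, b j ^ (α j)) ^ 2 ≤ D := hDb b hb
      have hP20 : (0:ℝ) ≤ (∏ j, b j ^ (α j)) ^ 2 := sq_nonneg _
      have h1 : l ^ s * (∏ j, b j ^ (α j)) ^ 2 ≤ l ^ t * D := mul_le_mul hA hP2D hP20 hAt0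
      have hbk : ε ≤ b k ^ (2 * d) := hmin b hb
      have h2 : D ≤ (D / ε) * b k ^ (2 * d) := by
        have h2' := mul_le_mul_of_nonneg_left hbk (div_nonneg hD hεpos.le)
        rwa [div_mul_cancel₀ D (ne_of_gt hεpos)] at h2'
      have h3 : l ^ t * D ≤ l ^ t * ((D / ε) * b k ^ (2 * d)) :=
        mul_le_mul_of_nonneg_left h2 hAt0
      calc l ^ s * (∏ j, b j ^ (α j)) ^ 2 ≤ l ^ t * ((D / ε) * b k ^ (2 * d)) := le_trans h1 h3
        _ = D / ε * (l ^ t * b k ^ (2 * d)) := by ring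

lemma tentacle_necessary {n m : ℕ} (z : Fin m → Fin n → ℤ) (B : Fin m → Set (Fin n → ℝ))
    (d : ℕ) (α : Fin n →₀ ℕ) (i : Fin m)
    (hBint : (interior (B i)).Nonempty) (hBne : ∀ b ∈ B i, ∀ j, b j ≠ 0)
    (q : MvPolynomial (Fin n) ℝ) (hqdeg : q.totalDegree ≤ 2 * d)
    (hq : ∀ l : ℝ, 1 ≤ l → ∀ b ∈ B i,
      (eval (fun j => l ^ (z i j) * b j) (monomial α (1 : ℝ))) ^ 2
        ≤ eval (fun j => l ^ (z i j) * b j) q) :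
    (∑ j, z i j * (α j : ℤ)) ≤ (d : ℤ) * (phi z i : ℤ) := by
  classical
  obtain ⟨b, hb'⟩ := hBint
  have hb : b ∈ B i := interior_subset hb'
  set K : ℝ := (∏ j, b j ^ (α j)) ^ 2 with hKdef
  have hKpos : 0 < K := by
    have hne : (∏ j, b j ^ (α j)) ≠ 0 :=
      Finset.prod_ne_zero_iff.mpr fun j _ => pow_ne_zero _ (hBne b hb j)
    positivity
  set Cq : ℝ := ∑ β ∈ q.support, |coeff β q| * ∏ j, |b j| ^ β j with hCqdef
  set T : ℤ := 2 * d * (phi z i) with hTdef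
  -- upper bound for eval of q along the tentacle
  have hup : ∀ l : ℝ, 1 ≤ l →
      eval (fun j => l ^ (z i j) * b j) q ≤ Cq * l ^ ((T : ℤ) : ℝ) := by
    intro l hl1
    have hl0 : (0 : ℝ) < l := lt_of_lt_of_le one_pos hl1
    rw [eval_eq']
    rw [hCqdef, Finset.sum_mul]
    apply Finset.sum_le_sum
    intro β hβ
    have habs : ∀ j, |l ^ (z i j) * b j| = l ^ (z i j) * |b j| := by
      intro j
      rw [abs_mul, abs_of_pos (zpow_pos hl0 _)]
    have h1 : coeff β q * ∏ j, (l ^ (z i j) * b j) ^ β j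
        ≤ |coeff β q| * ∏ j, (l ^ (z i j) * |b j|) ^ β j := by
      have := abs_mul (coeff β q) (∏ j, (l ^ (z i j) * b j) ^ β j)
      have h2 : |∏ j, (l ^ (z i j) * b j) ^ β j| = ∏ j, (l ^ (z i j) * |b j|) ^ β j := by
        rw [Finset.abs_prod]
        exact Finset.prod_congr rfl fun j _ => by rw [abs_pow, habs j]
      calc coeff β q * ∏ j, (l ^ (z i j) * b j) ^ β j
          ≤ |coeff β q * ∏ j, (l ^ (z i j) * b j) ^ β j| := le_abs_self _
        _ = |coeff β q| * ∏ j, (l ^ (z i j) * |b j|) ^ β j := by rw [abs_mul, h2]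
    refine h1.trans ?_
    rw [tent_eval hl0]
    have hexp : (∑ j, z i j * (β j : ℤ)) ≤ T := by
      have hβd : (∑ j, (β j : ℤ)) ≤ 2 * d := by
        have hsum : (β.sum fun _ e => e) ≤ q.totalDegree := le_totalDegree hβ
        have hβsum : (β.sum fun _ e => e) = ∑ j, β j :=
          Finsupp.sum_fintype _ _ fun j => rfl
        have : (∑ j, β j) ≤ 2 * d := by omega
        exact_mod_cast this
      have hterm : ∀ j, z i j * (β j : ℤ) ≤ (phi z i : ℤ) * (β j : ℤ) := by
        intro j
        have h1 : (z i j).toNat ≤ phi z i := by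
          unfold phi
          exact Finset.le_sup (f := fun j => (z i j).toNat) (Finset.mem_univ j)
        have h2 : z i j ≤ (phi z i : ℤ) := by omega
        exact mul_le_mul_of_nonneg_right h2 (by positivity)
      calc (∑ j, z i j * (β j : ℤ)) ≤ ∑ j, (phi z i : ℤ) * (β j : ℤ) :=
            Finset.sum_le_sum fun j _ => hterm j
        _ = (phi z i : ℤ) * ∑ j, (β j : ℤ) := by rw [Finset.mul_sum]
        _ ≤ (phi z i : ℤ) * (2 * d) := by
            exact mul_le_mul_of_nonneg_left hβd (by positivity)
        _ = T := by rw [hTdef]; ring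
    have hmono : l ^ (((∑ j, z i j * (β j : ℤ)) : ℤ) : ℝ) ≤ l ^ ((T : ℤ) : ℝ) :=
      Real.rpow_le_rpow_of_exponent_le hl1 (by exact_mod_cast hexp)
    have hprodnn : (0:ℝ) ≤ ∏ j, |b j| ^ β j := Finset.prod_nonneg fun j _ => by positivity
    calc |coeff β q| * (l ^ (((∑ j, z i j * (β j : ℤ)) : ℤ) : ℝ) * ∏ j, |b j| ^ β j)
        ≤ |coeff β q| * (l ^ ((T : ℤ) : ℝ) * ∏ j, |b j| ^ β j) := by
          apply mul_le_mul_of_nonneg_left _ (abs_nonneg _)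
          exact mul_le_mul_of_nonneg_right hmono hprodnn
      _ = |coeff β q| * (∏ j, |b j| ^ β j) * l ^ ((T : ℤ) : ℝ) := by ring
  -- lower bound
  have hlow : ∀ l : ℝ, 1 ≤ l →
      l ^ ((((∑ j, z i j * (α j : ℤ)) * 2 : ℤ)) : ℝ) * K
        ≤ eval (fun j => l ^ (z i j) * b j) q := by
    intro l hl1
    have hl0 : (0 : ℝ) < l := lt_of_lt_of_le one_pos hl1
    have := hq l hl1 b hb
    rw [eval_monomial_prod, tent_eval hl0, mul_pow, rpow_pow hl0] at this
    convert this using 3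
    push_cast
    ring
  by_contra hcon
  push_neg at hcon
  set e : ℤ := (∑ j, z i j * (α j : ℤ)) * 2 - T with hedef
  have he1 : 1 ≤ e := by
    rw [hedef, hTdef]
    nlinarith [hcon]
  set l : ℝ := max 1 (Cq / K) + 1 with hldef
  have hl1 : 1 ≤ l := by
    have h := le_max_left 1 (Cq / K)
    rw [hldef]
    linarith
  have hl0 : (0 : ℝ) < l := lt_of_lt_of_le one_pos hl1
  have hmain := (hlow l hl1).trans (hup l hl1)
  have hsplit : l ^ ((((∑ j, z i j * (α j : ℤ)) * 2 : ℤ)) : ℝ)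
      = l ^ ((e : ℤ) : ℝ) * l ^ ((T : ℤ) : ℝ) := by
    rw [← Real.rpow_add hl0]
    congr 1
    push_cast [hedef]
    ring
  rw [hsplit] at hmain
  have hTpos : (0:ℝ) < l ^ ((T : ℤ) : ℝ) := Real.rpow_pos_of_pos hl0 _
  have hdiv : l ^ ((e : ℤ) : ℝ) * K ≤ Cq := by
    rw [mul_right_comm] at hmain
    exact le_of_mul_le_mul_right hmain hTpos
  have hle : l ≤ l ^ ((e : ℤ) : ℝ) := by
    nth_rewrite 1 [← Real.rpow_one l]
    exact Real.rpow_le_rpow_of_exponent_le hl1 (by exact_mod_cast he1)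
  have hgt : Cq / K < l := by
    have := le_max_right 1 (Cq / K)
    rw [hldef]
    linarith
  have hfin : l ^ ((e : ℤ) : ℝ) ≤ Cq / K := (le_div_iff₀ hKpos).mpr hdiv
  exact absurd (hle.trans hfin) (not_le.mpr hgt)

lemma monomial_mem_Bset_iff {n m : ℕ} (z : Fin m → Fin n → ℤ)
    (B : Fin m → Set (Fin n → ℝ)) (d : ℕ)
    (hBcpt : ∀ i, IsCompact (B i))
    (hBint : ∀ i, (interior (B i)).Nonempty)
    (hBne : ∀ i, ∀ b ∈ B i, ∀ j, b j ≠ 0)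
    (S : Set (Fin n → ℝ))
    (hS : S = ⋃ i, {a | ∃ l : ℝ, 1 ≤ l ∧ ∃ b ∈ B i, a = fun j => l ^ (z i j) * b j})
    (α : Fin n →₀ ℕ) :
    (monomial α (1 : ℝ)) ∈ Bset n d S ↔
      ∀ i, (∑ j, z i j * (α j : ℤ)) ≤ (d : ℤ) * (phi z i : ℤ) := by
  constructor
  · rintro ⟨q, hqdeg, hq⟩ i
    apply tentacle_necessary z B d α i (hBint i) (hBne i) q hqdeg
    intro l hl1 b hb
    apply hq
    rw [hS]
    exact Set.mem_iUnion.mpr ⟨i, ⟨l, hl1, b, hb, rfl⟩⟩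
  · intro h
    choose qq hdeg hnn hbound using fun i => tentacle_q z B d α i (hBcpt i) (hBne i) (h i)
    refine ⟨∑ i, qq i, ?_, ?_⟩
    · exact (totalDegree_finset_sum _ _).trans (Finset.sup_le fun i _ => hdeg i)
    · intro a ha
      rw [hS, Set.mem_iUnion] at ha
      obtain ⟨i, l, hl1, b, hb, rfl⟩ := ha
      have hev : eval (fun j => l ^ (z i j) * b j) (∑ i', qq i')
          = ∑ i', eval (fun j => l ^ (z i j) * b j) (qq i') := by
        exact map_sum _ _ _
      rw [hev]
      refine le_trans (hbound i l hl1 b hb) ?_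
      exact Finset.single_le_sum
        (f := fun i' => eval (fun j => l ^ (z i j) * b j) (qq i'))
        (fun i' _ => hnn i' _) (Finset.mem_univ i)

theorem BS_finitely_generated (n m : ℕ) (z : Fin m → Fin n → ℤ)
    (B : Fin m → Set (Fin n → ℝ))
    (hBcpt : ∀ i, IsCompact (B i))
    (hBsa : ∀ i, IsSemialgebraic (B i))
    (hBint : ∀ i, (interior (B i)).Nonempty)
    (hBne : ∀ i, ∀ b ∈ B i, ∀ j, b j ≠ 0)
    (S : Set (Fin n → ℝ))
    (hS : S = ⋃ i, {a | ∃ l : ℝ, 1 ≤ l ∧ ∃ b ∈ B i, a = fun j => l ^ (z i j) * b j}) :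
    ∃ s : Finset (MvPolynomial (Fin (n + 1)) ℝ),
      (Algebra.adjoin ℝ (↑s : Set (MvPolynomial (Fin (n + 1)) ℝ)) : Set (MvPolynomial (Fin (n + 1)) ℝ)) =
        ↑(Submodule.span ℝ (BMonomials n S)) := by
  classical
  -- the linear inequalities cutting out the exponent monoid
  set L : Fin m → Fin (n + 1) → ℤ :=
    fun i => Fin.snoc (fun j => z i j) (-(phi z i : ℤ)) with hL
  obtain ⟨G, hG⟩ := ineq_monoid_fg (n + 1) m L
  refine ⟨G.image fun μ => monomial μ (1 : ℝ), ?_⟩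
  rw [adjoin_monomials]
  congr 1
  -- it remains to identify `BMonomials n S` with the image of the exponent monoid
  have key : BMonomials n S =
      (fun μ => monomial μ (1 : ℝ)) ''
        (AddSubmonoid.closure (↑G : Set (Fin (n + 1) →₀ ℕ)) : Set (Fin (n + 1) →₀ ℕ)) := by
    ext f
    constructor
    · rintro ⟨d, α, hα, rfl⟩
      refine ⟨_, ?_, rfl⟩
      rw [SetLike.mem_coe, hG]
      intro i
      have h := (monomial_mem_Bset_iff z B d hBcpt hBint hBne S hS α).mp hα i
      rw [Fin.sum_univ_castSucc]
      simp only [hL, Finsupp.coe_equivFunOnFinite_symm, Fin.snoc_castSucc, Fin.snoc_last]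
      linarith
    · rintro ⟨μ, hμ, rfl⟩
      rw [SetLike.mem_coe, hG] at hμ
      refine ⟨μ (Fin.last n), Finsupp.equivFunOnFinite.symm (fun j => μ j.castSucc), ?_, ?_⟩
      · rw [monomial_mem_Bset_iff z B _ hBcpt hBint hBne S hS]
        intro i
        have h := hμ i
        rw [Fin.sum_univ_castSucc] at h
        simp only [hL, Fin.snoc_castSucc, Fin.snoc_last,
          Finsupp.coe_equivFunOnFinite_symm] at h ⊢
        linarith
      · congr 1
        apply Finsupp.equivFunOnFinite.injective
        ext j
        simp only [Finsupp.coe_equivFunOnFinite_symm, Equiv.apply_symm_apply]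
        induction j using Fin.lastCases with
        | last => simp
        | cast j => simp
  rw [key]
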